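/- Let N ≥ 1, p₁, p₂ ∈ ℂ, and let u, v : ℤ → ℤ → ZMod N → ℂ with v everywhere nonzero. Assume the Miura relations hold for all n, m ∈ ℤ and h ∈ ZMod N: p₁ + u n m (h+1) − u (n+1) m h = p₁ · (v (n+1) m h)/(v n m h) and p₂ + u n m (h+1) − u n (m+1) h = p₂ · (v n (m+1) h)/(v n m h). Then v satisfies the modified lattice system: for all n, m, h, p₁·( (v (n+1) (m+1) h)/(v n (m+1) h) − (v (n+1) m (h+1))/(v n m (h+1)) ) = p₂·( (v (n+1) (m+1) h)/(v (n+1) m h) − (v n (m+1) (h+1))/(v n m (h+1)) ). -/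
import Mathlib

theorem miura_implies_modified_system (N : ℕ) (hN : 1 ≤ N) (p₁ p₂ : ℂ)
    (u v : ℤ → ℤ → ZMod N → ℂ)
    (hv : ∀ n m h, v n m h ≠ 0)
    (hM1 : ∀ (n m : ℤ) (h : ZMod N),
      p₁ + u n m (h+1) - u (n+1) m h = p₁ * (v (n+1) m h) / (v n m h))
    (hM2 : ∀ (n m : ℤ) (h : ZMod N),
      p₂ + u n m (h+1) - u n (m+1) h = p₂ * (v n (m+1) h) / (v n m h)) :
    ∀ (n m : ℤ) (h : ZMod N),
      p₁ * ((v (n+1) (m+1) h) / (v n (m+1) h) - (v (n+1) m (h+1)) / (v n m (h+1)))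
        = p₂ * ((v (n+1) (m+1) h) / (v (n+1) m h) - (v n (m+1) (h+1)) / (v n m (h+1))) := by
  intro n m h
  have A := hM1 n (m+1) h
  have B := hM1 n m (h+1)
  have C := hM2 (n+1) m h
  have D := hM2 n m (h+1)
  rw [mul_sub, mul_sub, ← mul_div_assoc, ← mul_div_assoc, ← mul_div_assoc,
    ← mul_div_assoc, ← A, ← B, ← C, ← D]
  ring
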